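/- Let σ be a ranking over a set S of κ items drawn from the PL model with parameter θ, and suppose max_{i,i′∈S} |θ_i − θ_{i′}| ≤ 2b. Then for every item i ∈ S and every 1 ≤ ℓ ≤ κ − 1, P[σ^{−1}(i) ≤ ℓ] ≥ e^{−2b} · ℓ/κ. -/

import Mathlib

open Real

noncomputable section

/- A ranking of a finite set `S`: a bijection from positions `Fin S.card`
(position `0` is the highest rank) to the elements of `S`. -/
abbrev Ranking {ι : Type*} [DecidableEq ι] (S : Finset ι) := Fin S.card ≃ {x // x ∈ S}

/- The Plackett–Luce probability of observing the ranking `σ` of the set `S`,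
under parameter `θ`. -/
noncomputable def PLProb {ι : Type*} [DecidableEq ι] (θ : ι → ℝ) (S : Finset ι)
    (σ : Ranking S) : ℝ :=
  ∏ a : Fin S.card,
    (Real.exp (θ (σ a).1) /
      ∑ a' ∈ Finset.univ.filter (fun a' => a ≤ a'), Real.exp (θ (σ a').1))

/- The (1-based) position at which item `i` is ranked by `σ`. -/
def rankOf {ι : Type*} [DecidableEq ι] {S : Finset ι} (σ : Ranking S)
    (i : {x // x ∈ S}) : ℕ := (σ.symm i).val + 1

/- Probability of an event under the PL model for a single ranking of `S`. -/
open Classical in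
noncomputable def PLprobEvent {ι : Type*} [DecidableEq ι] (θ : ι → ℝ) (S : Finset ι)
    (E : Ranking S → Prop) : ℝ :=
  ∑ σ : Ranking S, if E σ then PLProb θ S σ else 0

/- Probability of an event for `n` independent PL rankings of fixed offer sets. -/
open Classical in
noncomputable def jointProb {d n : ℕ} (θ : Fin d → ℝ) (S : Fin n → Finset (Fin d))
    (E : (∀ j, Ranking (S j)) → Prop) : ℝ :=
  ∑ σ : (∀ j, Ranking (S j)), if E σ then ∏ j, PLProb θ (S j) (σ j) else 0

/- The parameter space `Ω_b`. -/
def OmegaB {d : ℕ} (b : ℝ) (θ : Fin d → ℝ) : Prop :=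
  (∑ i, θ i) = 0 ∧ ∀ i, |θ i| ≤ b

/- Contribution to the rank-breaking log-likelihood from the separator at
(1-based) position `p` of the ranking `σ`. -/
open Classical in
noncomputable def rbTerm {d : ℕ} (θ : Fin d → ℝ) {S : Finset (Fin d)} (σ : Ranking S)
    (p : ℕ) : ℝ :=
  ∑ i ∈ S.attach, ∑ i' ∈ S.attach,
    if rankOf σ i' = p ∧ p < rankOf σ i then
      θ i'.1 - Real.log (Real.exp (θ i.1) + Real.exp (θ i'.1))
    else 0

/- The rank-breaking log-likelihood. -/
noncomputable def LRB {d n : ℕ} (S : Fin n → Finset (Fin d)) (ℓ : Fin n → ℕ)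
    (p : (j : Fin n) → Fin (ℓ j) → ℕ) (lam : (j : Fin n) → Fin (ℓ j) → ℝ)
    (σ : ∀ j, Ranking (S j)) (θ : Fin d → ℝ) : ℝ :=
  ∑ j, ∑ a, lam j a * rbTerm θ (σ j) (p j a)

/- The rank-one matrix `(e_i - e_{i'}) (e_i - e_{i'})ᵀ`. -/
noncomputable def pairMatrix {d : ℕ} (i i' : Fin d) : Matrix (Fin d) (Fin d) ℝ :=
  Matrix.vecMulVec (Pi.single i 1 - Pi.single i' 1) (Pi.single i 1 - Pi.single i' 1)

/- Weighted comparison-graph Laplacian `Σ_j w_j Σ_{i<i' ∈ S_j} (e_i-e_{i'})(e_i-e_{i'})ᵀ`. -/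
open Classical in
noncomputable def graphLaplacian {d n : ℕ} (S : Fin n → Finset (Fin d)) (w : Fin n → ℝ) :
    Matrix (Fin d) (Fin d) ℝ :=
  ∑ j, w j • ∑ i ∈ S j, ∑ i' ∈ S j, if i < i' then pairMatrix i i' else 0

/- The eigenvalues of a Hermitian matrix, sorted in increasing order. -/
noncomputable def sortedEig {d : ℕ} {M : Matrix (Fin d) (Fin d) ℝ} (hM : M.IsHermitian) :
    Fin d → ℝ :=
  hM.eigenvalues ∘ Tuple.sort hM.eigenvalues

/- Euclidean norm of a vector in `ℝ^m`. -/
noncomputable def l2norm {m : ℕ} (v : Fin m → ℝ) : ℝ := Real.sqrt (∑ i, (v i) ^ 2)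

end


-- Auxiliary development

noncomputable def Qfun {n : ℕ} (w : Fin n → ℝ) (pr : Equiv.Perm (Fin n)) : ℝ :=
  ∏ a, (w (pr a) / ∑ a' ∈ Finset.univ.filter (fun a' => a ≤ a'), w (pr a'))

lemma sum_filter_succ {n : ℕ} (f : Fin (n+1) → ℝ) (a : Fin n) :
    ∑ a' ∈ Finset.univ.filter (fun a' => a.succ ≤ a'), f a'
      = ∑ j ∈ Finset.univ.filter (fun j => a ≤ j), f j.succ := by
  rw [Finset.sum_filter, Finset.sum_filter, Fin.sum_univ_succ]
  simp [Fin.succ_le_succ_iff, Fin.le_zero_iff, Fin.succ_ne_zero]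

lemma Qfun_decompose {n : ℕ} (w : Fin (n+1) → ℝ) (p : Fin (n+1)) (e : Equiv.Perm (Fin n)) :
    Qfun w (Equiv.Perm.decomposeFin.symm (p, e)) =
      (w p / ∑ x, w x) * Qfun (fun j => w (Equiv.swap 0 p j.succ)) e := by
  unfold Qfun
  rw [Fin.prod_univ_succ]
  congr 1
  · rw [Equiv.Perm.decomposeFin_symm_apply_zero]
    congr 1
    rw [Finset.filter_true_of_mem (fun x _ => Fin.zero_le x)]
    exact Equiv.sum_comp _ w
  · apply Finset.prod_congr rfl
    intro a _
    rw [Equiv.Perm.decomposeFin_symm_apply_succ]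
    congr 1
    rw [sum_filter_succ]
    apply Finset.sum_congr rfl
    intro j _
    rw [Equiv.Perm.decomposeFin_symm_apply_succ]

lemma Qfun_nonneg {n : ℕ} {w : Fin n → ℝ} (hw : ∀ x, 0 < w x) (pr : Equiv.Perm (Fin n)) :
    0 ≤ Qfun w pr := by
  apply Finset.prod_nonneg
  intro a _
  apply div_nonneg (hw _).le
  exact Finset.sum_nonneg fun x _ => (hw _).le

lemma Qsum : ∀ (n : ℕ) (w : Fin n → ℝ), (∀ x, 0 < w x) →
    ∑ pr : Equiv.Perm (Fin n), Qfun w pr = 1 := by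
  intro n
  induction n with
  | zero =>
    intro w hw
    rw [Finset.sum_congr rfl (fun pr _ => show Qfun w pr = 1 by simp [Qfun])]
    simp
  | succ n IH =>
    intro w hw
    have hW : 0 < ∑ x, w x := Finset.sum_pos (fun x _ => hw x) Finset.univ_nonempty
    rw [← Equiv.sum_comp (Equiv.Perm.decomposeFin).symm (Qfun w), Fintype.sum_prod_type]
    have h1 : ∀ p : Fin (n+1),
        ∑ e : Equiv.Perm (Fin n), Qfun w (Equiv.Perm.decomposeFin.symm (p, e))
          = w p / ∑ x, w x := by
      intro p
      rw [Finset.sum_congr rfl (fun e _ => Qfun_decompose w p e), ← Finset.mul_sum,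
        IH _ (fun j => hw _), mul_one]
    rw [Finset.sum_congr rfl (fun p _ => h1 p), ← Finset.sum_div, div_self hW.ne']

lemma arith (C N L s : ℝ) (hC : 1 ≤ C) (hL1 : 2 ≤ L) (hL2 : L ≤ N + 1)
    (hs : 1/(C*(N+1)) ≤ s) :
    L / (C*(N+1)) ≤ s + (1 - s) * ((L-1)/(C*N)) := by
  have hN : 1 ≤ N := by linarith
  have hC0 : 0 < C := by linarith
  have hN0 : 0 < N := by linarith
  have h1 : 1 ≤ s * (C*(N+1)) := by
    rw [div_le_iff₀ (by positivity)] at hs; linarith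
  have hfact : L - 1 ≤ C * N := by nlinarith
  have h2 : s + (1-s)*((L-1)/(C*N)) = (s*(C*N) + (1-s)*(L-1)) / (C*N) := by
    field_simp
  rw [h2, div_le_div_iff₀ (by positivity) (by positivity)]
  nlinarith [mul_nonneg (sub_nonneg.2 h1) (sub_nonneg.2 hfact),
    mul_nonneg (sub_nonneg.2 hC) (by linarith : (0:ℝ) ≤ L - 1)]


lemma Qmain : ∀ (n : ℕ) (w : Fin n → ℝ) (C : ℝ), (∀ x, 0 < w x) → 1 ≤ C →
    (∀ x y, w x ≤ C * w y) → ∀ (i0 : Fin n) (ℓ : ℕ), 1 ≤ ℓ → ℓ ≤ n →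
    (ℓ : ℝ) / (C * n) ≤
      ∑ pr : Equiv.Perm (Fin n), if ((pr⁻¹ i0 : Fin n) : ℕ) < ℓ then Qfun w pr else 0 := by
  intro n
  induction n with
  | zero => intro w C hw hC1 hC i0; exact i0.elim0
  | succ n IH =>
    intro w C hw hC1 hC i0 ℓ hl1 hl2
    have hW : 0 < ∑ x, w x := Finset.sum_pos (fun x _ => hw x) Finset.univ_nonempty
    set W := ∑ x, w x with hWdef
    have hC0 : (0:ℝ) < C := by linarith
    -- s bound
    have hWle : W ≤ (n+1 : ℝ) * (C * w i0) := by
      rw [hWdef]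
      calc ∑ x, w x ≤ ∑ _x : Fin (n+1), C * w i0 := Finset.sum_le_sum (fun x _ => hC x i0)
      _ = (n+1 : ℝ) * (C * w i0) := by
          rw [Finset.sum_const, Finset.card_univ, Fintype.card_fin]; push_cast; ring
    have hs : 1 / (C * (n+1 : ℝ)) ≤ w i0 / W := by
      rw [div_le_div_iff₀ (by positivity) hW]
      nlinarith
    -- decompose the sum
    rw [← Equiv.sum_comp (Equiv.Perm.decomposeFin).symm
      (fun pr => if ((pr⁻¹ i0 : Fin (n+1)) : ℕ) < ℓ then Qfun w pr else 0),
      Fintype.sum_prod_type,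
      ← Finset.add_sum_erase _ _ (Finset.mem_univ i0)]
    -- head term
    have head : ∑ e : Equiv.Perm (Fin n),
        (if (((Equiv.Perm.decomposeFin.symm (i0, e))⁻¹ i0 : Fin (n+1)) : ℕ) < ℓ then
          Qfun w (Equiv.Perm.decomposeFin.symm (i0, e)) else 0) = w i0 / W := by
      have h0 : ∀ e : Equiv.Perm (Fin n),
          ((Equiv.Perm.decomposeFin.symm (i0, e))⁻¹ i0 : Fin (n+1)) = 0 := by
        intro e
        have hz := Equiv.Perm.decomposeFin_symm_apply_zero i0 e
        have h2 := (Equiv.Perm.decomposeFin.symm (i0, e)).symm_apply_apply 0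
        rwa [hz] at h2
      rw [Finset.sum_congr rfl (fun e _ => by
        rw [h0 e, if_pos (show ((0 : Fin (n+1)) : ℕ) < ℓ from Nat.lt_of_lt_of_le Nat.zero_lt_one hl1), Qfun_decompose])]
      rw [← Finset.mul_sum, Qsum n _ (fun j => hw _), mul_one]
    rw [head]
    -- tail terms
    have tail : ∀ p ∈ Finset.univ.erase i0,
        (w p / W) * (((ℓ - 1 : ℕ) : ℝ) / (C * n)) ≤
        ∑ e : Equiv.Perm (Fin n),
          (if (((Equiv.Perm.decomposeFin.symm (p, e))⁻¹ i0 : Fin (n+1)) : ℕ) < ℓ then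
            Qfun w (Equiv.Perm.decomposeFin.symm (p, e)) else 0) := by
      intro p hp
      have hpne : p ≠ i0 := (Finset.mem_erase.mp hp).1
      have ht : Equiv.swap 0 p i0 ≠ 0 := by
        intro h
        apply hpne
        have := congrArg (Equiv.swap 0 p) h
        rw [Equiv.swap_apply_self, Equiv.swap_apply_left] at this
        exact this.symm
      set t' : Fin n := (Equiv.swap 0 p i0).pred ht with ht'
      have hinv : ∀ e : Equiv.Perm (Fin n),
          ((Equiv.Perm.decomposeFin.symm (p, e))⁻¹ i0 : Fin (n+1)) = (e⁻¹ t').succ := by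
        intro e
        rw [Equiv.Perm.inv_eq_iff_eq, Equiv.Perm.decomposeFin_symm_apply_succ,
          Equiv.Perm.coe_inv, Equiv.apply_symm_apply, ht', Fin.succ_pred, Equiv.swap_apply_self]
      have hrw : ∀ e : Equiv.Perm (Fin n),
          (if (((Equiv.Perm.decomposeFin.symm (p, e))⁻¹ i0 : Fin (n+1)) : ℕ) < ℓ then
            Qfun w (Equiv.Perm.decomposeFin.symm (p, e)) else 0)
          = (w p / W) * (if ((e⁻¹ t' : Fin n) : ℕ) < ℓ - 1 then
              Qfun (fun j => w (Equiv.swap 0 p j.succ)) e else 0) := by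
        intro e
        rw [hinv e, Fin.val_succ, Qfun_decompose, mul_ite, mul_zero]
        exact if_congr (by omega) rfl rfl
      rw [Finset.sum_congr rfl (fun e _ => hrw e), ← Finset.mul_sum]
      apply mul_le_mul_of_nonneg_left _ (div_nonneg (hw p).le hW.le)
      rcases Nat.lt_or_ge ℓ 2 with h2 | h2
      · have : ℓ - 1 = 0 := by omega
        rw [this]
        simp only [Nat.cast_zero, zero_div]
        exact Finset.sum_nonneg fun e _ => by
          split
          · exact Qfun_nonneg (fun j => hw _) e
          · exact le_refl 0
      · exact IH _ C (fun j => hw _) hC1 (fun x y => hC _ _) t' (ℓ-1) (by omega) (by omega)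
    have tailsum := Finset.sum_le_sum tail
    have hsum_erase : ∑ p ∈ Finset.univ.erase i0, (w p / W) * (((ℓ - 1 : ℕ) : ℝ) / (C * n))
        = (1 - w i0 / W) * (((ℓ - 1 : ℕ) : ℝ) / (C * n)) := by
      rw [← Finset.sum_mul]
      congr 1
      rw [← Finset.sum_div]
      rw [Finset.sum_erase_eq_sub (Finset.mem_univ i0)]
      field_simp
      rfl
    rw [hsum_erase] at tailsum
    have final : (ℓ : ℝ) / (C * (n+1 : ℕ)) ≤
        w i0 / W + (1 - w i0 / W) * (((ℓ - 1 : ℕ) : ℝ) / (C * n)) := by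
      rcases Nat.lt_or_ge ℓ 2 with h2 | h2
      · have hl : ℓ = 1 := by omega
        subst hl
        simp only [Nat.sub_self, Nat.cast_zero, zero_div, mul_zero, add_zero, Nat.cast_one]
        push_cast
        exact hs
      · have hcast : ((ℓ - 1 : ℕ) : ℝ) = (ℓ : ℝ) - 1 := by
          push_cast [Nat.cast_sub hl1]; ring
        rw [hcast]
        push_cast
        exact arith C n ℓ (w i0 / W) hC1 (by exact_mod_cast h2) (by exact_mod_cast hl2) hs
    linarith

theorem statement_15 {ι : Type*} [DecidableEq ι]
    (θ : ι → ℝ) (S : Finset ι) (b : ℝ)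
    (hθb : ∀ i ∈ S, ∀ i' ∈ S, |θ i - θ i'| ≤ 2 * b)
    (i : ι) (hi : i ∈ S)
    (ℓ : ℕ) (hℓ1 : 1 ≤ ℓ) (hℓ2 : ℓ ≤ S.card - 1) :
    Real.exp (-(2 * b)) * (ℓ : ℝ) / (S.card : ℝ) ≤
      PLprobEvent θ S (fun σ => rankOf σ ⟨i, hi⟩ ≤ ℓ) := by
  classical
  set κ := S.card with hκdef
  have hκ : 0 < κ := Finset.card_pos.mpr ⟨i, hi⟩
  set e0 : Fin κ ≃ {x // x ∈ S} := S.equivFin.symm with he0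
  set w : Fin κ → ℝ := fun j => Real.exp (θ (e0 j).1) with hw
  set i0 : Fin κ := e0.symm ⟨i, hi⟩ with hi0
  have hb : 0 ≤ b := by
    have := hθb i hi i hi
    simp at this
    linarith
  have hC1 : (1:ℝ) ≤ Real.exp (2*b) := by
    rw [Real.one_le_exp_iff]; linarith
  have hCw : ∀ x y, w x ≤ Real.exp (2*b) * w y := by
    intro x y
    rw [hw]
    simp only
    rw [← Real.exp_add]
    apply Real.exp_le_exp.mpr
    have := hθb (e0 x).1 (e0 x).2 (e0 y).1 (e0 y).2
    rw [abs_le] at this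
    linarith [this.1, this.2]
  -- transfer the sum
  have key := Qmain κ w (Real.exp (2*b)) (fun x => Real.exp_pos _) hC1 hCw i0 ℓ hℓ1 (by omega)
  have transfer : ∑ pr : Equiv.Perm (Fin κ), (if ((pr⁻¹ i0 : Fin κ) : ℕ) < ℓ then Qfun w pr else 0)
      = PLprobEvent θ S (fun σ => rankOf σ ⟨i, hi⟩ ≤ ℓ) := by
    rw [PLprobEvent]
    apply Fintype.sum_equiv ((Equiv.refl (Fin κ)).equivCongr e0)
    intro pr
    have hrank : rankOf (((Equiv.refl (Fin κ)).equivCongr e0) pr) ⟨i, hi⟩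
        = ((pr⁻¹ i0 : Fin κ) : ℕ) + 1 := by
      have hsymm : (((Equiv.refl (Fin κ)).equivCongr e0) pr).symm ⟨i, hi⟩ = pr⁻¹ i0 := by
        rw [Equiv.symm_apply_eq]
        simp [hi0]
      rw [rankOf, hsymm]
    have hQ : Qfun w pr = PLProb θ S (((Equiv.refl (Fin κ)).equivCongr e0) pr) := by
      rw [Qfun, PLProb]
      apply Finset.prod_congr rfl
      intro a _
      simp [hw]
      convert rfl
    by_cases h : ((pr⁻¹ i0 : Fin κ) : ℕ) < ℓ
    · rw [if_pos h, if_pos (show rankOf (((Equiv.refl (Fin κ)).equivCongr e0) pr) ⟨i, hi⟩ ≤ ℓ by rw [hrank]; omega), hQ]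
    · rw [if_neg h, if_neg (show ¬ rankOf (((Equiv.refl (Fin κ)).equivCongr e0) pr) ⟨i, hi⟩ ≤ ℓ by rw [hrank]; omega)]
  rw [transfer] at key
  refine le_trans (le_of_eq ?_) key
  rw [Real.exp_neg]
  field_simp
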